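/- For any tree t in G rooted at s and spanning a set U with k := |U|, the number of {s}-U-paths in the transition graph 𝒢 representing t is at most (k−1)!, with equality when t has depth one. -/

import Mathlib

/-- The cost vector of a set of edges: the componentwise sum of the edge cost vectors. -/
noncomputable def treeCost {V : Type*} [Fintype V] {d : ℕ}
    (c : Sym2 V → (Fin d → ℝ)) (E : Set (Sym2 V)) : Fin d → ℝ :=
  ∑ e ∈ E.toFinite.toFinset, c e

/-- `x` dominates `y` if `x ≤ y` componentwise and `x ≠ y`. -/
def Dominates {d : ℕ} (x y : Fin d → ℝ) : Prop := x ≤ y ∧ x ≠ y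

/-- `t` is a spanning tree of the induced subgraph `G(U)`:
a subgraph of `G` with vertex set `U` that is connected and acyclic. -/
def IsSpanningTreeOf {V : Type*} (G : SimpleGraph V) (U : Set V)
    (t : G.Subgraph) : Prop :=
  t.verts = U ∧ t.coe.IsTree

/-- `t` is an efficient spanning tree of `G(U)`: no spanning tree of `G(U)` dominates it. -/
def IsEfficientSpanningTree {V : Type*} [Fintype V] {d : ℕ} (G : SimpleGraph V)
    (c : Sym2 V → (Fin d → ℝ)) (U : Set V) (t : G.Subgraph) : Prop :=
  IsSpanningTreeOf G U t ∧
    ¬ ∃ t' : G.Subgraph, IsSpanningTreeOf G U t' ∧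
      Dominates (treeCost c t'.edgeSet) (treeCost c t.edgeSet)

/-- The edge `e` lies in the cut `δ(U)`: it is an edge of `G` with exactly one endpoint in `U`. -/
def InCut {V : Type*} (G : SimpleGraph V) (U : Set V) (e : Sym2 V) : Prop :=
  e ∈ G.edgeSet ∧ ∃ u w : V, e = s(u, w) ∧ u ∈ U ∧ w ∉ U

/-- An arc of the transition graph out of node `U`, identified by an ordered
preimage edge `(u, w)` with `u ∈ U`, `w ∉ U`, `[u,w] ∈ E`. -/
def TransStep {V : Type*} (G : SimpleGraph V) (U : Set V) (e : V × V) : Prop :=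
  e.1 ∈ U ∧ e.2 ∉ U ∧ G.Adj e.1 e.2

/-- A path in the transition graph from node `U` to node `W`, recorded as the
list of (ordered) preimage edges of its arcs. -/
def TransWalk {V : Type*} (G : SimpleGraph V) : Set V → Set V → List (V × V) → Prop
  | U, W, [] => U = W
  | U, W, e :: p => TransStep G U e ∧ TransWalk G (insert e.2 U) W p

/-- The path `p` in the transition graph represents the tree `t`:
the preimage edges of the arcs of `p` are exactly the edges of `t`. -/
def Represents {V : Type*} (G : SimpleGraph V) (p : List (V × V)) (t : G.Subgraph) : Prop :=
  t.edgeSet = {e | ∃ uw ∈ p, e = s(uw.1, uw.2)}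

/-- The cost of a path in the transition graph: the sum of the costs of the
preimage edges of its arcs. -/
def walkCost {V : Type*} {d : ℕ} (c : Sym2 V → (Fin d → ℝ))
    (p : List (V × V)) : Fin d → ℝ :=
  (p.map fun uw => c s(uw.1, uw.2)).sum

/-- The set of nondominated vectors of `Y`. -/
def NDSet {d : ℕ} (Y : Set (Fin d → ℝ)) : Set (Fin d → ℝ) :=
  {y ∈ Y | ¬ ∃ y' ∈ Y, y' ≤ y ∧ y' ≠ y}

section Helpers

variable {V : Type*} {G : SimpleGraph V}

lemma transWalk_aux : ∀ (p : List (V × V)) (A W : Set V), TransWalk G A W p →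
    (∀ e ∈ p, e.2 ∉ A) ∧ (p.map Prod.snd).Nodup ∧ W = A ∪ {x | x ∈ p.map Prod.snd} := by
  intro p
  induction p with
  | nil =>
    intro A W h
    have : A = W := h
    subst this
    simp
  | cons e p ih =>
    intro A W h
    obtain ⟨⟨h1, h2, h3⟩, hw⟩ := h
    obtain ⟨ha, hb, hc⟩ := ih _ _ hw
    refine ⟨?_, ?_, ?_⟩
    · intro f hf
      rcases List.mem_cons.mp hf with rfl | hf
      · exact h2
      · intro hfA
        exact ha f hf (Set.mem_insert_of_mem _ hfA)
    · simp only [List.map_cons, List.nodup_cons]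
      refine ⟨?_, hb⟩
      intro hmem
      obtain ⟨f, hf, hfe⟩ := List.mem_map.mp hmem
      exact ha f hf (hfe ▸ Set.mem_insert _ _)
    · rw [hc]
      ext x
      simp only [Set.mem_union, Set.mem_insert_iff, Set.mem_setOf_eq, List.map_cons,
        List.mem_cons]
      tauto

/-- Every vertex of `A` is reachable from `s0` in `t` by a walk staying inside `A`. -/
def Conn {G : SimpleGraph V} (t : G.Subgraph) (s0 : t.verts) (A : Set V) : Prop :=
  ∀ a ∈ A, ∃ (ha : a ∈ t.verts), ∃ w : t.coe.Walk s0 ⟨a, ha⟩, ∀ x ∈ w.support, ↑x ∈ A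

lemma conn_insert {t : G.Subgraph} {s0 : t.verts} {A : Set V} (hA : Conn t s0 A)
    {u w : V} (hu : u ∈ A) (h : t.Adj u w) : Conn t s0 (insert w A) := by
  intro a haw
  rcases Set.mem_insert_iff.mp haw with rfl | haA
  · obtain ⟨hu', wk, hwk⟩ := hA u hu
    refine ⟨h.snd_mem, wk.concat (by simpa using h), ?_⟩
    intro x hx
    rw [SimpleGraph.Walk.support_concat, List.mem_append,
      List.mem_singleton] at hx
    rcases hx with hx | hx
    · exact Set.mem_insert_of_mem _ (hwk x hx)
    · subst hx; exact Set.mem_insert _ _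
  · obtain ⟨ha', wk, hwk⟩ := hA a haA
    exact ⟨ha', wk, fun x hx => Set.mem_insert_of_mem _ (hwk x hx)⟩

lemma unique_parent {t : G.Subgraph} (htree : t.coe.IsTree) {s0 : t.verts} {A : Set V}
    (hA : Conn t s0 A) {u u' w : V} (hwA : w ∉ A)
    (hu : u ∈ A) (hu' : u' ∈ A) (h1 : t.Adj u w) (h2 : t.Adj u' w) : u = u' := by
  obtain ⟨hum, w1, hw1⟩ := hA u hu
  obtain ⟨hu'm, w2, hw2⟩ := hA u' hu'
  have hw : w ∈ t.verts := h1.snd_mem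
  -- a walk from u to u' inside A
  set W0 : t.coe.Walk ⟨u, hum⟩ ⟨u', hu'm⟩ := w1.reverse.append w2 with hW0
  have hW0supp : ∀ x ∈ W0.support, ↑x ∈ A := by
    intro x hx
    rw [hW0, SimpleGraph.Walk.mem_support_append_iff] at hx
    rcases hx with hx | hx
    · exact hw1 x (by simpa [SimpleGraph.Walk.support_reverse] using hx)
    · exact hw2 x hx
  haveI : DecidableEq ↑t.verts := Classical.decEq _
  set P0 := W0.bypass with hP0
  have hP0path : P0.IsPath := SimpleGraph.Walk.bypass_isPath W0
  have hP0supp : ∀ x ∈ P0.support, ↑x ∈ A := fun x hx =>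
    hW0supp x (SimpleGraph.Walk.support_bypass_subset W0 hx)
  have hwP0 : (⟨w, hw⟩ : t.verts) ∉ P0.support := fun hmem => hwA (hP0supp _ hmem)
  have hadj1 : t.coe.Adj ⟨w, hw⟩ ⟨u, hum⟩ := by simpa using h1.symm
  have hadj2 : t.coe.Adj ⟨w, hw⟩ ⟨u', hu'm⟩ := by simpa using h2.symm
  have hwu' : (⟨w, hw⟩ : t.verts) ≠ ⟨u', hu'm⟩ := by
    intro hEq
    exact hwA (by rw [show w = u' from congrArg Subtype.val hEq]; exact hu')
  -- two paths from w to u'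
  have hpath1 : (SimpleGraph.Walk.cons hadj2 SimpleGraph.Walk.nil).IsPath := by
    simp [SimpleGraph.Walk.isPath_def, hwu']
  have hpath2 : (SimpleGraph.Walk.cons hadj1 P0).IsPath := hP0path.cons hwP0
  have huniq := htree.existsUnique_path ⟨w, hw⟩ ⟨u', hu'm⟩
  obtain ⟨q, -, hq⟩ := huniq
  have heq : SimpleGraph.Walk.cons hadj2 SimpleGraph.Walk.nil
      = SimpleGraph.Walk.cons hadj1 P0 := by
    rw [hq _ hpath1, hq _ hpath2]
  have hsup := congrArg SimpleGraph.Walk.support heq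
  rw [SimpleGraph.Walk.support_cons, SimpleGraph.Walk.support_cons,
    SimpleGraph.Walk.support_nil, P0.support_eq_cons] at hsup
  have := (List.cons.injEq _ _ _ _).mp hsup
  have h2' := (List.cons.injEq _ _ _ _).mp this.2
  exact congrArg Subtype.val h2'.1.symm

lemma walk_inj {t : G.Subgraph} (htree : t.coe.IsTree) {s0 : t.verts} :
    ∀ (p q : List (V × V)) (A W : Set V), Conn t s0 A →
    TransWalk G A W p → TransWalk G A W q →
    (∀ e ∈ p, t.Adj e.1 e.2) → (∀ e ∈ q, t.Adj e.1 e.2) →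
    p.map Prod.snd = q.map Prod.snd → p = q := by
  intro p
  induction p with
  | nil =>
    intro q A W _ _ _ _ _ hmap
    exact (List.map_eq_nil_iff.mp hmap.symm).symm
  | cons e p ih =>
    intro q A W hA hwp hwq hpe hqe hmap
    cases q with
    | nil => simp at hmap
    | cons f q =>
      simp only [List.map_cons, List.cons.injEq] at hmap
      obtain ⟨hsnd, hmap'⟩ := hmap
      obtain ⟨⟨he1, he2, -⟩, hwp'⟩ := hwp
      obtain ⟨⟨hf1, -, -⟩, hwq'⟩ := hwq
      have htep : t.Adj e.1 e.2 := hpe e (List.mem_cons_self)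
      have hteq : t.Adj f.1 f.2 := hqe f (List.mem_cons_self)
      have hfst : e.1 = f.1 :=
        unique_parent htree hA he2 he1 hf1 htep (by rw [hsnd]; exact hteq)
      have hef : e = f := Prod.ext hfst hsnd
      subst hef
      have hA' : Conn t s0 (insert e.2 A) := conn_insert hA he1 htep
      have := ih q (insert e.2 A) W hA' hwp' hwq'
        (fun x hx => hpe x (List.mem_cons_of_mem _ hx))
        (fun x hx => hqe x (List.mem_cons_of_mem _ hx)) hmap'
      rw [this]


lemma edge_root {t : G.Subgraph} (htree : t.coe.IsTree) {s : V}
    (h1 : ∀ v ∈ t.verts, v ≠ s → t.Adj s v) {a b : V} (hab : t.Adj a b) :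
    a = s ∨ b = s := by
  by_contra hcon
  push_neg at hcon
  obtain ⟨has, hbs⟩ := hcon
  have ha := hab.fst_mem
  have hb := hab.snd_mem
  have hsa : t.Adj s a := h1 a ha has
  have hsb : t.Adj s b := h1 b hb hbs
  have hsm : s ∈ t.verts := hsa.fst_mem
  have hadj1 : t.coe.Adj ⟨a, ha⟩ ⟨b, hb⟩ := by simpa using hab
  have hadjas : t.coe.Adj ⟨a, ha⟩ ⟨s, hsm⟩ := by simpa using hsa.symm
  have hadjsb : t.coe.Adj ⟨s, hsm⟩ ⟨b, hb⟩ := by simpa using hsb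
  have hpath1 : (SimpleGraph.Walk.cons hadj1 SimpleGraph.Walk.nil).IsPath := by
    rw [SimpleGraph.Walk.isPath_def]
    simp [Subtype.ext_iff, hab.ne]
  have hpath2 : (SimpleGraph.Walk.cons hadjas
      (SimpleGraph.Walk.cons hadjsb SimpleGraph.Walk.nil)).IsPath := by
    rw [SimpleGraph.Walk.isPath_def]
    simp [Subtype.ext_iff, hab.ne, has, Ne.symm hbs]
  obtain ⟨q, -, hq⟩ := htree.existsUnique_path ⟨a, ha⟩ ⟨b, hb⟩
  have heq : SimpleGraph.Walk.cons hadj1 SimpleGraph.Walk.nil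
      = SimpleGraph.Walk.cons hadjas (SimpleGraph.Walk.cons hadjsb SimpleGraph.Walk.nil) := by
    rw [hq _ hpath1, hq _ hpath2]
  have hsup := congrArg (fun w => w.support.length) heq
  simp [SimpleGraph.Walk.support_cons] at hsup

lemma edge_char {t : G.Subgraph} (htree : t.coe.IsTree) {s : V}
    (h1 : ∀ v ∈ t.verts, v ≠ s → t.Adj s v) {e : Sym2 V} :
    e ∈ t.edgeSet ↔ ∃ v, v ∈ t.verts ∧ v ≠ s ∧ e = s(s, v) := by
  constructor
  · intro he
    induction e using Sym2.ind with
    | _ a b =>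
      rw [SimpleGraph.Subgraph.mem_edgeSet] at he
      rcases edge_root htree h1 he with rfl | rfl
      · exact ⟨b, he.snd_mem, fun h => he.ne h.symm, rfl⟩
      · exact ⟨a, he.fst_mem, he.ne, Sym2.eq_swap⟩
  · rintro ⟨v, hv, hvs, rfl⟩
    exact SimpleGraph.Subgraph.mem_edgeSet.mpr (h1 v hv hvs)

lemma build_walk {s : V} : ∀ (l : List V) (A : Set V), s ∈ A → (∀ v ∈ l, v ∉ A) →
    l.Nodup → (∀ v ∈ l, G.Adj s v) →
    TransWalk G A (A ∪ {x | x ∈ l}) (l.map fun v => (s, v)) := by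
  intro l
  induction l with
  | nil =>
    intro A hsA _ _ _
    show A = A ∪ _
    simp
  | cons v l ih =>
    intro A hsA hlA hnd hadj
    rw [List.map_cons]
    refine ⟨⟨hsA, hlA v (List.mem_cons_self), hadj v (List.mem_cons_self)⟩, ?_⟩
    have hstep := ih (insert v A) (Set.mem_insert_of_mem _ hsA)
      (fun x hx hmem => by
        rcases Set.mem_insert_iff.mp hmem with rfl | hmem
        · exact (List.nodup_cons.mp hnd).1 hx
        · exact hlA x (List.mem_cons_of_mem _ hx) hmem)
      (List.nodup_cons.mp hnd).2
      (fun x hx => hadj x (List.mem_cons_of_mem _ hx))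
    have hset : insert v A ∪ {x | x ∈ l} = A ∪ {x | x ∈ v :: l} := by
      ext x
      simp only [Set.mem_union, Set.mem_insert_iff, Set.mem_setOf_eq, List.mem_cons]
      tauto
    exact hset ▸ hstep

end Helpers

/-- any tree rooted at `s` spanning `U` with `k = |U|` has at most `(k-1)!`
representations as `{s}`-`U`-paths, with equality for depth-one trees. -/
theorem stmt_13 {V : Type*} [Fintype V] (G : SimpleGraph V) (hG : G.Connected)
    (s : V) (U : Set V) (hs : s ∈ U)
    (t : G.Subgraph) (ht : IsSpanningTreeOf G U t) :
    {p : List (V × V) | TransWalk G {s} U p ∧ Represents G p t}.ncard ≤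
      Nat.factorial (U.ncard - 1) ∧
    ((∀ v ∈ U, v ≠ s → t.Adj s v) →
      {p : List (V × V) | TransWalk G {s} U p ∧ Represents G p t}.ncard =
        Nat.factorial (U.ncard - 1)) := by
  classical
  obtain ⟨hverts, htree⟩ := ht
  have hsv : s ∈ t.verts := hverts.symm ▸ hs
  set S := {p : List (V × V) | TransWalk G {s} U p ∧ Represents G p t} with hSdef
  have hUfin : U.Finite := Set.toFinite U
  set F : Finset V := hUfin.toFinset.erase s with hF
  have hFmem : ∀ x, x ∈ F ↔ x ∈ U ∧ x ≠ s := by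
    intro x
    rw [hF, Finset.mem_erase, hUfin.mem_toFinset]
    tauto
  have hFcard : F.card = U.ncard - 1 := by
    rw [hF, Finset.card_erase_of_mem (hUfin.mem_toFinset.mpr hs),
      Set.ncard_eq_toFinset_card _ hUfin]
  set L := {l : List V | l.Perm F.toList} with hLdef
  have hLset : L = ↑(F.toList.permutations.toFinset) := by
    ext l
    simp [hLdef, List.mem_permutations]
  have hLfin : L.Finite := hLset ▸ (F.toList.permutations.toFinset).finite_toSet
  have hLcard : L.ncard = Nat.factorial (U.ncard - 1) := by
    rw [hLset, Set.ncard_coe_finset,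
      List.toFinset_card_of_nodup (List.nodup_permutations _ F.nodup_toList),
      List.length_permutations, Finset.length_toList, hFcard]
  have hConn0 : Conn t ⟨s, hsv⟩ {s} := by
    intro a ha
    rw [Set.mem_singleton_iff] at ha
    subst ha
    refine ⟨hsv, SimpleGraph.Walk.nil, ?_⟩
    intro x hx
    simp only [SimpleGraph.Walk.support_nil, List.mem_singleton] at hx
    subst hx
    rfl
  have hedge : ∀ p ∈ S, ∀ e ∈ p, t.Adj e.1 e.2 := by
    intro p hp e he
    have := hp.2
    rw [Represents] at this
    exact SimpleGraph.Subgraph.mem_edgeSet.mp (this ▸ ⟨e, he, rfl⟩)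
  have hmemL : ∀ p ∈ S, p.map Prod.snd ∈ L := by
    intro p hp
    obtain ⟨hnotin, hnd, hUeq⟩ := transWalk_aux p {s} U hp.1
    refine List.perm_of_nodup_nodup_toFinset_eq hnd F.nodup_toList ?_
    ext x
    rw [List.mem_toFinset, List.mem_toFinset, Finset.mem_toList, hFmem]
    constructor
    · intro hx
      refine ⟨hUeq ▸ Set.mem_union_right _ hx, ?_⟩
      obtain ⟨e, he, rfl⟩ := List.mem_map.mp hx
      exact fun h => hnotin e he (by simp [h])
    · rintro ⟨hxU, hxs⟩
      have : x ∈ ({s} : Set V) ∪ {y | y ∈ p.map Prod.snd} := hUeq ▸ hxU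
      rcases this with h | h
      · exact absurd h hxs
      · exact h
  have hinj : Set.InjOn (fun p => p.map Prod.snd) S := by
    intro p hp q hq hpq
    exact walk_inj htree p q {s} U hConn0 hp.1 hq.1 (hedge p hp) (hedge q hq) hpq
  have himg : (fun p => p.map Prod.snd) '' S ⊆ L := by
    rintro _ ⟨p, hp, rfl⟩
    exact hmemL p hp
  constructor
  · calc S.ncard = ((fun p => p.map Prod.snd) '' S).ncard :=
          (Set.ncard_image_of_injOn hinj).symm
      _ ≤ L.ncard := Set.ncard_le_ncard himg hLfin
      _ = _ := hLcard
  · intro h1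
    have h1' : ∀ v ∈ t.verts, v ≠ s → t.Adj s v := by
      intro v hv hvs
      exact h1 v (hverts ▸ hv) hvs
    have himg2 : (fun p => p.map Prod.snd) '' S = L := by
      refine subset_antisymm himg ?_
      intro l hl
      have hlnd : l.Nodup := ((hl : l.Perm F.toList).nodup_iff).mpr F.nodup_toList
      have hlm : ∀ x, x ∈ l ↔ x ∈ U ∧ x ≠ s := by
        intro x
        rw [(hl : l.Perm F.toList).mem_iff, Finset.mem_toList, hFmem]
      set p := l.map fun v => (s, v) with hpdef
      have hset : ({s} : Set V) ∪ {x | x ∈ l} = U := by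
        ext x
        simp only [Set.mem_union, Set.mem_singleton_iff, Set.mem_setOf_eq, hlm]
        constructor
        · rintro (rfl | ⟨h, -⟩)
          · exact hs
          · exact h
        · intro hx
          by_cases hxs : x = s
          · exact Or.inl hxs
          · exact Or.inr ⟨hx, hxs⟩
      have hwalk : TransWalk G {s} U p := by
        have := build_walk l {s} rfl
          (fun v hv hmem => ((hlm v).mp hv).2 hmem)
          hlnd
          (fun v hv => t.adj_sub (h1 v ((hlm v).mp hv).1 ((hlm v).mp hv).2))
        exact hset ▸ this
      have hrep : Represents G p t := by
        rw [Represents]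
        ext e
        rw [edge_char htree h1']
        simp only [Set.mem_setOf_eq, hpdef, List.mem_map]
        constructor
        · rintro ⟨v, hv, hvs, rfl⟩
          exact ⟨(s, v), ⟨v, (hlm v).mpr ⟨hverts ▸ hv, hvs⟩, rfl⟩, rfl⟩
        · rintro ⟨uw, ⟨v, hv, rfl⟩, rfl⟩
          exact ⟨v, hverts.symm ▸ ((hlm v).mp hv).1, ((hlm v).mp hv).2, rfl⟩
      refine ⟨p, ⟨hwalk, hrep⟩, ?_⟩
      show List.map Prod.snd (List.map (fun v => (s, v)) l) = l
      rw [List.map_map]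
      simp
    calc S.ncard = ((fun p => p.map Prod.snd) '' S).ncard :=
          (Set.ncard_image_of_injOn hinj).symm
      _ = L.ncard := by rw [himg2]
      _ = _ := hLcard
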